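/- Let A be a 4-dimensional 𝔽₂-symplectic vector space realized as E[2] × E[2] for E the elliptic curve ℂ/⟨1, ξ⟩ with ξ = e^{2πi/6}, and let G be the group of automorphisms of E × E generated by the matrices g₁ = [[ξ,0],[0,1]], g₂ = [[0,1],[1,0]], g₃ = [[1,1],[0,1]] acting on 2-torsion. Then the induced action of G on the set of 35 planes of (𝔽₂)⁴ ≅ A[2] has exactly two orbits, of cardinalities 5 and 30. -/

import Mathlib

/- The 2-torsion group A[2] of A = E_ξ × E_ξ, as an 𝔽₂-symplectic space, is
modelled combinatorially (as in the context) as V = (𝔽₂)² × (𝔽₂)², where: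
g₁ cyclically permutes the three nonzero vectors of the first factor (the
action of multiplication by ξ on E_ξ[2]), g₂ swaps the two factors, and g₃ is
the transvection (u,v) ↦ (u+v, v). -/

abbrev V17 : Type := (ZMod 2 × ZMod 2) × (ZMod 2 × ZMod 2)

/-- Cyclic permutation of the three nonzero vectors of (𝔽₂)². -/
def cycMap : (ZMod 2 × ZMod 2) →ₗ[ZMod 2] (ZMod 2 × ZMod 2) where
  toFun p := (p.2, p.1 + p.2)
  map_add' := by decide
  map_smul' := by decide

def cycInvMap : (ZMod 2 × ZMod 2) →ₗ[ZMod 2] (ZMod 2 × ZMod 2) where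
  toFun p := (p.1 + p.2, p.1)
  map_add' := by decide
  map_smul' := by decide

def cyc : (ZMod 2 × ZMod 2) ≃ₗ[ZMod 2] (ZMod 2 × ZMod 2) :=
  LinearEquiv.ofLinear cycMap cycInvMap
    (by apply LinearMap.ext; decide) (by apply LinearMap.ext; decide)

/-- g₁ : cyclic permutation of the three nonzero vectors of the first factor. -/
def g₁ : V17 ≃ₗ[ZMod 2] V17 := cyc.prodCongr (LinearEquiv.refl (ZMod 2) _)

def swapMap : V17 →ₗ[ZMod 2] V17 where
  toFun p := (p.2, p.1)
  map_add' _ _ := rfl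
  map_smul' _ _ := rfl

/-- g₂ : swap of the two factors. -/
def g₂ : V17 ≃ₗ[ZMod 2] V17 :=
  LinearEquiv.ofLinear swapMap swapMap (by apply LinearMap.ext; intro p; rfl)
    (by apply LinearMap.ext; intro p; rfl)

def transMap : V17 →ₗ[ZMod 2] V17 where
  toFun p := (p.1 + p.2, p.2)
  map_add' p q := by
    refine Prod.ext ?_ rfl
    show p.1 + q.1 + (p.2 + q.2) = p.1 + p.2 + (q.1 + q.2)
    abel
  map_smul' c p := by
    refine Prod.ext ?_ rfl
    show c • p.1 + c • p.2 = c • (p.1 + p.2)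
    rw [smul_add]

/-- g₃ : the transvection (u,v) ↦ (u+v, v). -/
def g₃ : V17 ≃ₗ[ZMod 2] V17 :=
  LinearEquiv.ofLinear transMap transMap
    (by apply LinearMap.ext; decide) (by apply LinearMap.ext; decide)

/-- The group G generated by g₁, g₂, g₃. -/
def G17 : Subgroup (V17 ≃ₗ[ZMod 2] V17) := Subgroup.closure {g₁, g₂, g₃}

/-- Two planes are in the same G-orbit. -/
def sameOrbit (P Q : Submodule (ZMod 2) V17) : Prop :=
  ∃ g ∈ G17, P.map (g : V17 →ₗ[ZMod 2] V17) = Q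


open Submodule Module

def sp (p : V17 × V17) : Submodule (ZMod 2) V17 := span (ZMod 2) {p.1, p.2}

def mpred (p : V17 × V17) (x : V17) : Prop := ∃ s t : ZMod 2, s • p.1 + t • p.2 = x

instance (p : V17 × V17) : DecidablePred (mpred p) := fun x =>
  inferInstanceAs (Decidable (∃ s t : ZMod 2, s • p.1 + t • p.2 = x))

lemma mem_sp {p : V17 × V17} {x : V17} : x ∈ sp p ↔ mpred p x :=
  Submodule.mem_span_pair

lemma sp_eq_iff {p q : V17 × V17} : sp p = sp q ↔ ∀ x, mpred p x ↔ mpred q x := by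
  constructor
  · intro h x; rw [← mem_sp, ← mem_sp, h]
  · intro h; ext x; rw [mem_sp, mem_sp]; exact h x

lemma map_sp (f : V17 →ₗ[ZMod 2] V17) (p : V17 × V17) :
    (sp p).map f = sp (f p.1, f p.2) := by
  simp only [sp, Submodule.map_span, Set.image_insert_eq, Set.image_singleton]

lemma finrank_sp {p : V17 × V17} (h1 : p.1 ≠ 0) (h2 : p.2 ≠ 0) (h3 : p.1 ≠ p.2) :
    finrank (ZMod 2) (sp p) = 2 := by
  have hy : ∀ a : ZMod 2, a • p.1 ≠ p.2 := by
    intro a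
    have : a = 0 ∨ a = 1 := by revert a; decide
    rcases this with rfl | rfl
    · rw [zero_smul]; exact fun h => h2 h.symm
    · rw [one_smul]; exact h3
  have hli : LinearIndependent (ZMod 2) ((↑) : ({p.1, p.2} : Set V17) → V17) :=
    linearIndepOn_id_pair h1 hy
  rw [show sp p = span (ZMod 2) {p.1, p.2} from rfl, finrank_span_set_eq_card hli,
    Set.toFinset_insert, Set.toFinset_singleton,
    Finset.card_insert_of_notMem (by simpa using h3), Finset.card_singleton]

lemma classify {Q : Submodule (ZMod 2) V17} (hQ : finrank (ZMod 2) Q = 2) :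
    ∃ p : V17 × V17, p.1 ≠ 0 ∧ p.2 ≠ 0 ∧ p.1 ≠ p.2 ∧ Q = sp p := by
  have hbot : Q ≠ ⊥ := by
    intro h; rw [h, finrank_bot] at hQ; exact two_ne_zero hQ.symm
  obtain ⟨a, haQ, ha0⟩ := (Submodule.ne_bot_iff Q).mp hbot
  have hle1 : span (ZMod 2) {a} ≤ Q := by simpa using haQ
  have hlt : span (ZMod 2) {a} < Q := by
    rcases lt_or_eq_of_le hle1 with h | h
    · exact h
    · exfalso; rw [← h, finrank_span_singleton ha0] at hQ; omega
  obtain ⟨b, hbQ, hb⟩ := SetLike.exists_of_lt hlt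
  have hb0 : b ≠ 0 := fun h => hb (h ▸ Submodule.zero_mem _)
  have hab : a ≠ b := fun h => hb (h ▸ Submodule.mem_span_singleton_self a)
  refine ⟨(a, b), ha0, hb0, hab, ?_⟩
  have hle : sp (a, b) ≤ Q := by
    rw [show sp (a, b) = span (ZMod 2) {a, b} from rfl, span_le]
    intro x hx
    simp only [Set.mem_insert_iff, Set.mem_singleton_iff] at hx
    rcases hx with rfl | rfl
    · exact haQ
    · exact hbQ
  exact (Submodule.eq_of_le_of_finrank_eq hle
    (by rw [finrank_sp ha0 hb0 hab, hQ])).symm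

lemma hg₁ : g₁ ∈ G17 := Subgroup.subset_closure (by simp)
lemma hg₂ : g₂ ∈ G17 := Subgroup.subset_closure (by simp)
lemma hg₃ : g₃ ∈ G17 := Subgroup.subset_closure (by simp)

lemma map_one' (Q : Submodule (ZMod 2) V17) :
    Q.map ((1 : V17 ≃ₗ[ZMod 2] V17) : V17 →ₗ[ZMod 2] V17) = Q := by
  rw [show ((1 : V17 ≃ₗ[ZMod 2] V17) : V17 →ₗ[ZMod 2] V17) = LinearMap.id from rfl,
    Submodule.map_id]

lemma map_mul' (g h : V17 ≃ₗ[ZMod 2] V17) (Q : Submodule (ZMod 2) V17) :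
    Q.map ((g * h : V17 ≃ₗ[ZMod 2] V17) : V17 →ₗ[ZMod 2] V17)
      = (Q.map (h : V17 →ₗ[ZMod 2] V17)).map (g : V17 →ₗ[ZMod 2] V17) := by
  rw [show ((g * h : V17 ≃ₗ[ZMod 2] V17) : V17 →ₗ[ZMod 2] V17)
      = (g : V17 →ₗ[ZMod 2] V17).comp (h : V17 →ₗ[ZMod 2] V17) from rfl,
    Submodule.map_comp]

def v5 : Fin 5 → V17 × V17 := ![
  (((0,0),(0,1)), ((0,0),(1,0))),
  (((0,1),(0,0)), ((1,0),(0,0))),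
  (((0,1),(0,1)), ((1,0),(1,0))),
  (((0,1),(1,0)), ((1,0),(1,1))),
  (((0,1),(1,1)), ((1,0),(0,1)))
]

def v30 : Fin 30 → V17 × V17 := ![
  (((0,0),(0,1)), ((0,1),(0,0))),
  (((0,0),(0,1)), ((1,1),(0,0))),
  (((0,0),(0,1)), ((1,0),(0,0))),
  (((0,0),(1,1)), ((0,1),(0,0))),
  (((0,1),(0,1)), ((1,0),(0,1))),
  (((0,0),(1,0)), ((0,1),(0,0))),
  (((0,1),(0,1)), ((1,0),(0,0))),
  (((0,0),(1,1)), ((1,1),(0,0))),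
  (((0,1),(0,0)), ((1,0),(1,1))),
  (((0,0),(1,1)), ((0,1),(0,1))),
  (((0,0),(1,0)), ((1,1),(0,0))),
  (((0,1),(0,0)), ((1,0),(1,0))),
  (((0,1),(0,0)), ((1,0),(0,1))),
  (((0,0),(1,0)), ((0,1),(0,1))),
  (((0,0),(1,1)), ((1,0),(0,0))),
  (((0,1),(1,1)), ((1,0),(1,1))),
  (((0,0),(0,1)), ((1,1),(1,0))),
  (((0,0),(1,1)), ((1,1),(0,1))),
  (((0,0),(1,0)), ((1,0),(0,0))),
  (((0,1),(1,0)), ((1,0),(1,0))),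
  (((0,0),(0,1)), ((1,0),(1,0))),
  (((0,0),(0,1)), ((0,1),(1,0))),
  (((0,0),(1,0)), ((1,1),(0,1))),
  (((0,1),(1,1)), ((1,0),(0,0))),
  (((0,0),(1,1)), ((1,0),(0,1))),
  (((0,1),(1,0)), ((1,0),(0,1))),
  (((0,1),(1,0)), ((1,0),(0,0))),
  (((0,1),(0,1)), ((1,0),(1,1))),
  (((0,0),(1,0)), ((1,0),(0,1))),
  (((0,1),(1,1)), ((1,0),(1,0)))
]

def In5 (Q : Submodule (ZMod 2) V17) : Prop := ∃ i : Fin 5, Q = sp (v5 i)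

lemma fwd_of (g : V17 ≃ₗ[ZMod 2] V17)
    (hg : ∀ i : Fin 5, ∃ j : Fin 5, ∀ x,
      mpred ((g : V17 →ₗ[ZMod 2] V17) (v5 i).1, (g : V17 →ₗ[ZMod 2] V17) (v5 i).2) x
        ↔ mpred (v5 j) x) :
    ∀ Q, In5 Q → In5 (Q.map (g : V17 →ₗ[ZMod 2] V17)) := by
  rintro Q ⟨i, rfl⟩
  obtain ⟨j, hj⟩ := hg i
  exact ⟨j, by rw [map_sp, sp_eq_iff]; exact hj⟩

lemma fwd₁ : ∀ Q, In5 Q → In5 (Q.map (g₁ : V17 →ₗ[ZMod 2] V17)) := fwd_of g₁ (by decide)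
lemma fwd₂ : ∀ Q, In5 Q → In5 (Q.map (g₂ : V17 →ₗ[ZMod 2] V17)) := fwd_of g₂ (by decide)
lemma fwd₃ : ∀ Q, In5 Q → In5 (Q.map (g₃ : V17 →ₗ[ZMod 2] V17)) := fwd_of g₃ (by decide)

lemma ord₁ : g₁ * g₁ * g₁ = 1 := LinearEquiv.toLinearMap_injective (LinearMap.ext (by decide))
lemma ord₂ : g₂ * g₂ = 1 := LinearEquiv.toLinearMap_injective (LinearMap.ext (by decide))
lemma ord₃ : g₃ * g₃ = 1 := LinearEquiv.toLinearMap_injective (LinearMap.ext (by decide))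

lemma bwd₂ : ∀ Q, In5 (Q.map (g₂ : V17 →ₗ[ZMod 2] V17)) → In5 Q := by
  intro Q h
  have := fwd₂ _ h
  rwa [← map_mul', ord₂, map_one'] at this

lemma bwd₃ : ∀ Q, In5 (Q.map (g₃ : V17 →ₗ[ZMod 2] V17)) → In5 Q := by
  intro Q h
  have := fwd₃ _ h
  rwa [← map_mul', ord₃, map_one'] at this

lemma bwd₁ : ∀ Q, In5 (Q.map (g₁ : V17 →ₗ[ZMod 2] V17)) → In5 Q := by
  intro Q h
  have := fwd₁ _ (fwd₁ _ h)
  rwa [← map_mul', ← map_mul', ord₁, map_one'] at this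

lemma inv5 : ∀ g ∈ G17, ∀ Q : Submodule (ZMod 2) V17,
    In5 Q ↔ In5 (Q.map (g : V17 →ₗ[ZMod 2] V17)) := by
  intro g hg
  refine Subgroup.closure_induction
    (p := fun (g : V17 ≃ₗ[ZMod 2] V17) (_ : g ∈ Subgroup.closure {g₁, g₂, g₃}) =>
      ∀ Q : Submodule (ZMod 2) V17,
      In5 Q ↔ In5 (Q.map (g : V17 →ₗ[ZMod 2] V17))) ?_ ?_ ?_ ?_ hg
  · intro x hx
    simp only [Set.mem_insert_iff, Set.mem_singleton_iff] at hx
    rcases hx with rfl | rfl | rfl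
    · exact fun Q => ⟨fwd₁ Q, bwd₁ Q⟩
    · exact fun Q => ⟨fwd₂ Q, bwd₂ Q⟩
    · exact fun Q => ⟨fwd₃ Q, bwd₃ Q⟩
  · intro Q; rw [map_one']
  · intro x y _ _ px py Q
    rw [map_mul']
    exact (py Q).trans (px _)
  · intro x _ px Q
    have := px (Q.map ((x⁻¹ : V17 ≃ₗ[ZMod 2] V17) : V17 →ₗ[ZMod 2] V17))
    rw [← map_mul', mul_inv_cancel, map_one'] at this
    exact this.symm

lemma orbit_word (p : V17 × V17) (g : V17 ≃ₗ[ZMod 2] V17) (hg : g ∈ G17) (q : V17 × V17)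
    (h : ∀ x, mpred ((g : V17 →ₗ[ZMod 2] V17) p.1, (g : V17 →ₗ[ZMod 2] V17) p.2) x
      ↔ mpred q x) :
    sameOrbit (sp p) (sp q) :=
  ⟨g, hg, by rw [map_sp, sp_eq_iff]; exact h⟩

lemma orb5 : ∀ i : Fin 5, sameOrbit (sp (v5 0)) (sp (v5 i)) := by
  intro i
  fin_cases i
  · exact orbit_word _ (1 : V17 ≃ₗ[ZMod 2] V17) (one_mem _) _ (by decide)
  · exact orbit_word _ (g₂) hg₂ _ (by decide)
  · exact orbit_word _ (g₃) hg₃ _ (by decide)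
  · exact orbit_word _ (g₁ * g₃) (mul_mem hg₁ hg₃) _ (by decide)
  · exact orbit_word _ (g₁ * g₁ * g₃) (mul_mem (mul_mem hg₁ hg₁) hg₃) _ (by decide)

lemma orb30 : ∀ i : Fin 30, sameOrbit (sp (v30 0)) (sp (v30 i)) := by
  intro i
  fin_cases i
  · exact orbit_word _ (1 : V17 ≃ₗ[ZMod 2] V17) (one_mem _) _ (by decide)
  · exact orbit_word _ (g₁) hg₁ _ (by decide)
  · exact orbit_word _ (g₁ * g₁) (mul_mem hg₁ hg₁) _ (by decide)
  · exact orbit_word _ (g₂ * g₁) (mul_mem hg₂ hg₁) _ (by decide)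
  · exact orbit_word _ (g₃ * g₁) (mul_mem hg₃ hg₁) _ (by decide)
  · exact orbit_word _ (g₂ * g₁ * g₁) (mul_mem (mul_mem hg₂ hg₁) hg₁) _ (by decide)
  · exact orbit_word _ (g₃ * g₁ * g₁) (mul_mem (mul_mem hg₃ hg₁) hg₁) _ (by decide)
  · exact orbit_word _ (g₁ * g₂ * g₁) (mul_mem (mul_mem hg₁ hg₂) hg₁) _ (by decide)
  · exact orbit_word _ (g₃ * g₂ * g₁) (mul_mem (mul_mem hg₃ hg₂) hg₁) _ (by decide)
  · exact orbit_word _ (g₂ * g₃ * g₁) (mul_mem (mul_mem hg₂ hg₃) hg₁) _ (by decide)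
  · exact orbit_word _ (g₁ * g₂ * g₁ * g₁) (mul_mem (mul_mem (mul_mem hg₁ hg₂) hg₁) hg₁) _ (by decide)
  · exact orbit_word _ (g₃ * g₂ * g₁ * g₁) (mul_mem (mul_mem (mul_mem hg₃ hg₂) hg₁) hg₁) _ (by decide)
  · exact orbit_word _ (g₁ * g₃ * g₁ * g₁) (mul_mem (mul_mem (mul_mem hg₁ hg₃) hg₁) hg₁) _ (by decide)
  · exact orbit_word _ (g₂ * g₃ * g₁ * g₁) (mul_mem (mul_mem (mul_mem hg₂ hg₃) hg₁) hg₁) _ (by decide)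
  · exact orbit_word _ (g₁ * g₁ * g₂ * g₁) (mul_mem (mul_mem (mul_mem hg₁ hg₁) hg₂) hg₁) _ (by decide)
  · exact orbit_word _ (g₁ * g₃ * g₂ * g₁) (mul_mem (mul_mem (mul_mem hg₁ hg₃) hg₂) hg₁) _ (by decide)
  · exact orbit_word _ (g₂ * g₃ * g₂ * g₁) (mul_mem (mul_mem (mul_mem hg₂ hg₃) hg₂) hg₁) _ (by decide)
  · exact orbit_word _ (g₁ * g₂ * g₃ * g₁) (mul_mem (mul_mem (mul_mem hg₁ hg₂) hg₃) hg₁) _ (by decide)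
  · exact orbit_word _ (g₁ * g₁ * g₂ * g₁ * g₁) (mul_mem (mul_mem (mul_mem (mul_mem hg₁ hg₁) hg₂) hg₁) hg₁) _ (by decide)
  · exact orbit_word _ (g₃ * g₁ * g₂ * g₁ * g₁) (mul_mem (mul_mem (mul_mem (mul_mem hg₃ hg₁) hg₂) hg₁) hg₁) _ (by decide)
  · exact orbit_word _ (g₂ * g₃ * g₂ * g₁ * g₁) (mul_mem (mul_mem (mul_mem (mul_mem hg₂ hg₃) hg₂) hg₁) hg₁) _ (by decide)
  · exact orbit_word _ (g₂ * g₁ * g₃ * g₁ * g₁) (mul_mem (mul_mem (mul_mem (mul_mem hg₂ hg₁) hg₃) hg₁) hg₁) _ (by decide)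
  · exact orbit_word _ (g₁ * g₂ * g₃ * g₁ * g₁) (mul_mem (mul_mem (mul_mem (mul_mem hg₁ hg₂) hg₃) hg₁) hg₁) _ (by decide)
  · exact orbit_word _ (g₃ * g₁ * g₁ * g₂ * g₁) (mul_mem (mul_mem (mul_mem (mul_mem hg₃ hg₁) hg₁) hg₂) hg₁) _ (by decide)
  · exact orbit_word _ (g₁ * g₁ * g₂ * g₃ * g₁) (mul_mem (mul_mem (mul_mem (mul_mem hg₁ hg₁) hg₂) hg₃) hg₁) _ (by decide)
  · exact orbit_word _ (g₃ * g₁ * g₂ * g₃ * g₁) (mul_mem (mul_mem (mul_mem (mul_mem hg₃ hg₁) hg₂) hg₃) hg₁) _ (by decide)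
  · exact orbit_word _ (g₁ * g₃ * g₁ * g₂ * g₁ * g₁) (mul_mem (mul_mem (mul_mem (mul_mem (mul_mem hg₁ hg₃) hg₁) hg₂) hg₁) hg₁) _ (by decide)
  · exact orbit_word _ (g₃ * g₂ * g₁ * g₃ * g₁ * g₁) (mul_mem (mul_mem (mul_mem (mul_mem (mul_mem hg₃ hg₂) hg₁) hg₃) hg₁) hg₁) _ (by decide)
  · exact orbit_word _ (g₁ * g₁ * g₂ * g₃ * g₁ * g₁) (mul_mem (mul_mem (mul_mem (mul_mem (mul_mem hg₁ hg₁) hg₂) hg₃) hg₁) hg₁) _ (by decide)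
  · exact orbit_word _ (g₁ * g₃ * g₂ * g₁ * g₃ * g₁ * g₁) (mul_mem (mul_mem (mul_mem (mul_mem (mul_mem (mul_mem hg₁ hg₃) hg₂) hg₁) hg₃) hg₁) hg₁) _ (by decide)

lemma hv5a : ∀ i : Fin 5, (v5 i).1 ≠ 0 := by decide
lemma hv5b : ∀ i : Fin 5, (v5 i).2 ≠ 0 := by decide
lemma hv5c : ∀ i : Fin 5, (v5 i).1 ≠ (v5 i).2 := by decide
lemma hv30a : ∀ i : Fin 30, (v30 i).1 ≠ 0 := by decide
lemma hv30b : ∀ i : Fin 30, (v30 i).2 ≠ 0 := by decide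
lemma hv30c : ∀ i : Fin 30, (v30 i).1 ≠ (v30 i).2 := by decide

def inS (p q : V17 × V17) : Prop :=
  (p.1 = q.1 ∨ p.1 = q.2 ∨ p.1 = q.1 + q.2) ∧ (p.2 = q.1 ∨ p.2 = q.2 ∨ p.2 = q.1 + q.2)

instance (p q : V17 × V17) : Decidable (inS p q) :=
  inferInstanceAs (Decidable (_ ∧ _))

lemma sp_le_of_inS {p q : V17 × V17} (h : inS p q) : sp p ≤ sp q := by
  rw [show sp p = span (ZMod 2) {p.1, p.2} from rfl, span_le]
  intro x hx
  simp only [Set.mem_insert_iff, Set.mem_singleton_iff] at hx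
  have key : ∀ y : V17, (y = q.1 ∨ y = q.2 ∨ y = q.1 + q.2) → y ∈ sp q := by
    intro y hy
    rw [mem_sp]
    rcases hy with rfl | rfl | rfl
    · exact ⟨1, 0, by simp⟩
    · exact ⟨0, 1, by simp⟩
    · exact ⟨1, 1, by simp⟩
  rcases hx with rfl | rfl
  · exact key _ h.1
  · exact key _ h.2

lemma sp_eq_of_inS {p q : V17 × V17} (hp1 : p.1 ≠ 0) (hp2 : p.2 ≠ 0) (hp3 : p.1 ≠ p.2)
    (hq1 : q.1 ≠ 0) (hq2 : q.2 ≠ 0) (hq3 : q.1 ≠ q.2) (h : inS p q) : sp p = sp q :=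
  Submodule.eq_of_le_of_finrank_eq (sp_le_of_inS h)
    (by rw [finrank_sp hp1 hp2 hp3, finrank_sp hq1 hq2 hq3])

set_option maxRecDepth 100000 in
set_option maxHeartbeats 2000000 in
lemma key0 : ∀ p : V17 × V17, (p.1 = 0 ∨ p.2 = 0 ∨ p.1 = p.2)
    ∨ (∃ i : Fin 5, inS p (v5 i)) ∨ (∃ i : Fin 30, inS p (v30 i)) := by decide

lemma key : ∀ p : V17 × V17, p.1 ≠ 0 → p.2 ≠ 0 → p.1 ≠ p.2 →
    (∃ i : Fin 5, sp p = sp (v5 i)) ∨ (∃ i : Fin 30, sp p = sp (v30 i)) := by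
  intro p h1 h2 h3
  rcases key0 p with (h | h | h) | ⟨i, h⟩ | ⟨i, h⟩
  · exact absurd h h1
  · exact absurd h h2
  · exact absurd h h3
  · exact Or.inl ⟨i, sp_eq_of_inS h1 h2 h3 (hv5a i) (hv5b i) (hv5c i) h⟩
  · exact Or.inr ⟨i, sp_eq_of_inS h1 h2 h3 (hv30a i) (hv30b i) (hv30c i) h⟩

lemma not5 : ¬ ∃ i : Fin 5, ∀ x, mpred (v30 0) x ↔ mpred (v5 i) x := by decide

lemma inj5 : ∀ i j : Fin 5, (∀ x, mpred (v5 i) x ↔ mpred (v5 j) x) → i = j := by decide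
lemma inj30 : ∀ i j : Fin 30, (∀ x, mpred (v30 i) x ↔ mpred (v30 j) x) → i = j := by decide


lemma card_aux {n : ℕ} (v : Fin n → V17 × V17)
    (hinj : ∀ i j : Fin n, (∀ x, mpred (v i) x ↔ mpred (v j) x) → i = j) :
    Nat.card {Q : Submodule (ZMod 2) V17 // ∃ i : Fin n, Q = sp (v i)} = n := by
  have hf : Function.Bijective
      (fun i : Fin n => (⟨sp (v i), i, rfl⟩ : {Q : Submodule (ZMod 2) V17 // ∃ i, Q = sp (v i)})) := by
    constructor
    · intro i j hij
      have h : sp (v i) = sp (v j) := congrArg Subtype.val hij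
      exact hinj i j (sp_eq_iff.mp h)
    · rintro ⟨Q, i, rfl⟩
      exact ⟨i, rfl⟩
  rw [← Nat.card_eq_of_bijective _ hf, Nat.card_eq_fintype_card, Fintype.card_fin]

/-- The action of G on the 35 planes of (𝔽₂)⁴ has exactly two orbits, of
cardinalities 5 and 30. -/
theorem stmt17 :
    ∃ P₁ P₂ : Submodule (ZMod 2) V17,
      Module.finrank (ZMod 2) ↥P₁ = 2 ∧ Module.finrank (ZMod 2) ↥P₂ = 2 ∧
      ¬ sameOrbit P₁ P₂ ∧
      Nat.card {Q : Submodule (ZMod 2) V17 //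
          Module.finrank (ZMod 2) ↥Q = 2 ∧ sameOrbit P₁ Q} = 5 ∧
      Nat.card {Q : Submodule (ZMod 2) V17 //
          Module.finrank (ZMod 2) ↥Q = 2 ∧ sameOrbit P₂ Q} = 30 ∧
      ∀ Q : Submodule (ZMod 2) V17, Module.finrank (ZMod 2) ↥Q = 2 →
        sameOrbit P₁ Q ∨ sameOrbit P₂ Q := by
  refine ⟨sp (v5 0), sp (v30 0), ?_, ?_, ?_, ?_, ?_, ?_⟩
  · exact finrank_sp (hv5a 0) (hv5b 0) (hv5c 0)
  · exact finrank_sp (hv30a 0) (hv30b 0) (hv30c 0)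
  · rintro ⟨g, hg, hmap⟩
    have h5 : In5 (sp (v30 0)) := by
      rw [← hmap]; exact (inv5 g hg _).mp ⟨0, rfl⟩
    obtain ⟨i, hi⟩ := h5
    exact not5 ⟨i, sp_eq_iff.mp hi⟩
  · refine (Nat.card_congr (Equiv.subtypeEquivRight ?_)).trans (card_aux v5 inj5)
    intro Q
    constructor
    · rintro ⟨hrk, g, hg, rfl⟩
      exact (inv5 g hg _).mp ⟨0, rfl⟩
    · rintro ⟨i, rfl⟩
      exact ⟨finrank_sp (hv5a i) (hv5b i) (hv5c i), orb5 i⟩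
  · refine (Nat.card_congr (Equiv.subtypeEquivRight ?_)).trans (card_aux v30 inj30)
    intro Q
    constructor
    · rintro ⟨hrk, g, hg, rfl⟩
      have hn5 : ¬ In5 ((sp (v30 0)).map (g : V17 →ₗ[ZMod 2] V17)) := by
        intro h
        obtain ⟨i, hi⟩ := (inv5 g hg _).mpr h
        exact not5 ⟨i, sp_eq_iff.mp hi⟩
      obtain ⟨p, h1, h2, h3, hQp⟩ := classify hrk
      rcases key p h1 h2 h3 with ⟨i, hi⟩ | ⟨i, hi⟩
      · exact absurd ⟨i, hQp.trans hi⟩ hn5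
      · exact ⟨i, hQp.trans hi⟩
    · rintro ⟨i, rfl⟩
      exact ⟨finrank_sp (hv30a i) (hv30b i) (hv30c i), orb30 i⟩
  · intro Q hrk
    obtain ⟨p, h1, h2, h3, rfl⟩ := classify hrk
    rcases key p h1 h2 h3 with ⟨i, hi⟩ | ⟨i, hi⟩
    · left; rw [hi]; exact orb5 i
    · right; rw [hi]; exact orb30 i
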